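/- Suppose a finitely generated group Γ has the U-property: there exist finitely many elements g₁,…,g_p ∈ Γ and positive constants A, B such that ‖γ‖ ≤ A·sup_{1≤i≤p} ℓ(g_i γ) + B for all γ ∈ Γ. Then every well displacing isometric action of Γ on a metric space X (i.e., any action for which there exist α, β > 0 with d(x, γ·x) ≥ α ℓ(γ) − β for all x ∈ X, γ ∈ Γ) has orbit maps which are quasi-isometric embeddings: for every x ∈ X there exist constants C ≥ 1, D ≥ 0 with C⁻¹‖γ‖ − D ≤ d(x, γ·x) ≤ C‖γ‖ + D for all γ ∈ Γ. -/

import Mathlib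

/-- The word length of `γ` with respect to a generating set `S`. -/
noncomputable def wordLength {Γ : Type*} [Group Γ] (S : Set Γ) (γ : Γ) : ℕ :=
  sInf {n | ∃ l : List Γ, (∀ x ∈ l, x ∈ S ∨ x⁻¹ ∈ S) ∧ l.length = n ∧ l.prod = γ}

/-- The translation length `ℓ(γ) = inf_η ‖η γ η⁻¹‖`. -/
noncomputable def transLength {Γ : Type*} [Group Γ] (S : Set Γ) (γ : Γ) : ℕ :=
  sInf {n | ∃ η : Γ, wordLength S (η * γ * η⁻¹) = n}

/-- If `Γ` has the U-property, then every well displacing isometric action of `Γ`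
has orbit maps which are quasi-isometric embeddings. -/
theorem U_property_implies_orbit_qi {Γ : Type*} [Group Γ]
    (S : Set Γ) (hSfin : S.Finite) (hSgen : Subgroup.closure S = ⊤)
    -- the U-property
    (p : ℕ) (hp : 0 < p) (g : Fin p → Γ) (A B : ℝ) (hA : 0 < A) (hB : 0 < B)
    (hU : ∀ γ : Γ, (wordLength S γ : ℝ)
      ≤ A * (⨆ i : Fin p, (transLength S (g i * γ) : ℝ)) + B)
    -- a well displacing isometric action
    {X : Type*} [MetricSpace X] [MulAction Γ X]
    (hiso : ∀ h : Γ, Isometry fun x : X => h • x)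
    (α β : ℝ) (hα : 0 < α) (hβ : 0 < β)
    (hwd : ∀ (x : X) (γ : Γ), dist x (γ • x) ≥ α * (transLength S γ : ℝ) - β) :
    ∀ x : X, ∃ C ≥ (1 : ℝ), ∃ D ≥ (0 : ℝ), ∀ γ : Γ,
      C⁻¹ * (wordLength S γ : ℝ) - D ≤ dist x (γ • x) ∧
      dist x (γ • x) ≤ C * (wordLength S γ : ℝ) + D := by
  intro x
  haveI : Nonempty (Fin p) := ⟨⟨0, hp⟩⟩
  -- bound on generators
  obtain ⟨M₀, hM₀⟩ : ∃ M₀, ∀ s ∈ S, dist x (s • x) ≤ M₀ := by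
    have hfin : ((fun s : Γ => dist x (s • x)) '' S).Finite := hSfin.image _
    obtain ⟨M₀, hM₀⟩ := hfin.bddAbove
    exact ⟨M₀, fun s hs => hM₀ ⟨s, hs, rfl⟩⟩
  set M : ℝ := max 1 M₀ with hMdef
  have hM1 : (1 : ℝ) ≤ M := le_max_left _ _
  have hM : ∀ s ∈ S, dist x (s • x) ≤ M := fun s hs => (hM₀ s hs).trans (le_max_right _ _)
  -- bound on the g i
  set K : ℝ := (Finset.univ.sup' Finset.univ_nonempty fun i : Fin p => dist x (g i • x))
    with hKdef
  have hK : ∀ i : Fin p, dist x (g i • x) ≤ K := by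
    intro i; rw [hKdef]; exact Finset.le_sup' (fun j : Fin p => dist x (g j • x)) (Finset.mem_univ i)
  have hK0 : 0 ≤ K := le_trans dist_nonneg (hK ⟨0, hp⟩)
  -- upper bound on dist from word length
  have key : ∀ l : List Γ, (∀ y ∈ l, y ∈ S ∨ y⁻¹ ∈ S) →
      dist x (l.prod • x) ≤ M * l.length := by
    intro l
    induction l with
    | nil => intro _; simp
    | cons y t ih =>
      intro hl
      have hy : dist x (y • x) ≤ M := by
        rcases hl y List.mem_cons_self with h | h
        · exact hM y h
        · have : dist x (y • x) = dist x (y⁻¹ • x) := by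
            have := (hiso y⁻¹).dist_eq x (y • x)
            simp only [inv_smul_smul] at this
            rw [← this, dist_comm]
          rw [this]; exact hM _ h
      have ht : dist x (t.prod • x) ≤ M * t.length :=
        ih fun z hz => hl z (List.mem_cons_of_mem _ hz)
      have hiso' : dist (y • x) ((y * t.prod) • x) = dist x (t.prod • x) := by
        rw [mul_smul]; exact (hiso y).dist_eq x (t.prod • x)
      calc dist x ((y :: t).prod • x) = dist x ((y * t.prod) • x) := by
            rw [List.prod_cons]
        _ ≤ dist x (y • x) + dist (y • x) ((y * t.prod) • x) := dist_triangle _ _ _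
        _ ≤ M + M * t.length := by rw [hiso']; exact add_le_add hy ht
        _ = M * (y :: t).length := by
            simp [List.length_cons]; ring
  have upper : ∀ γ : Γ, dist x (γ • x) ≤ M * (wordLength S γ : ℝ) := by
    intro γ
    have hmem : γ ∈ Subgroup.closure S := by rw [hSgen]; trivial
    rw [← Subgroup.mem_toSubmonoid, Subgroup.closure_toSubmonoid] at hmem
    obtain ⟨l, hl0, hprod⟩ := Submonoid.exists_list_of_mem_closure hmem
    have hl : ∀ y ∈ l, y ∈ S ∨ y⁻¹ ∈ S := by
      intro y hy
      rcases hl0 y hy with h | h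
      · exact Or.inl h
      · exact Or.inr (Set.mem_inv.mp h)
    have hne : {n | ∃ l : List Γ, (∀ x ∈ l, x ∈ S ∨ x⁻¹ ∈ S) ∧ l.length = n ∧
        l.prod = γ}.Nonempty := ⟨l.length, l, hl, rfl, hprod⟩
    obtain ⟨l', hl', hlen', hprod'⟩ := Nat.sInf_mem hne
    calc dist x (γ • x) = dist x (l'.prod • x) := by rw [hprod']
      _ ≤ M * l'.length := key l' hl'
      _ = M * (wordLength S γ : ℝ) := by rw [hlen']; rfl
  refine ⟨max M (A / α), le_trans hM1 (le_max_left _ _),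
    (α / A) * B + K + β, by positivity, fun γ => ?_⟩
  set C : ℝ := max M (A / α) with hCdef
  have hCpos : 0 < C := lt_of_lt_of_le one_pos (le_trans hM1 (le_max_left _ _))
  constructor
  · -- lower bound
    have hd0 : 0 ≤ dist x (γ • x) := dist_nonneg
    have hsup : (⨆ i : Fin p, (transLength S (g i * γ) : ℝ))
        ≤ (K + dist x (γ • x) + β) / α := by
      apply ciSup_le
      intro i
      have h1 := hwd x (g i * γ)
      have h2 : dist x ((g i * γ) • x) ≤ K + dist x (γ • x) := by
        have h3 : dist (g i • x) ((g i * γ) • x) = dist x (γ • x) := by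
          rw [mul_smul]; exact (hiso (g i)).dist_eq x (γ • x)
        calc dist x ((g i * γ) • x)
            ≤ dist x (g i • x) + dist (g i • x) ((g i * γ) • x) := dist_triangle _ _ _
          _ ≤ K + dist x (γ • x) := by rw [h3]; exact add_le_add (hK i) le_rfl
      rw [le_div_iff₀ hα]
      nlinarith
    have hU' := hU γ
    have hsup' : A * (⨆ i : Fin p, (transLength S (g i * γ) : ℝ))
        ≤ A * ((K + dist x (γ • x) + β) / α) := by
      exact mul_le_mul_of_nonneg_left hsup hA.le
    have hw : (wordLength S γ : ℝ) ≤ A * ((K + dist x (γ • x) + β) / α) + B :=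
      le_trans hU' (add_le_add hsup' le_rfl)
    have hCinv : C⁻¹ ≤ α / A := by
      rw [← inv_div A α]
      exact inv_anti₀ (div_pos hA hα) (le_max_right _ _)
    have hwnn : (0 : ℝ) ≤ (wordLength S γ : ℝ) := Nat.cast_nonneg _
    have h5 : C⁻¹ * (wordLength S γ : ℝ) ≤ (α / A) * (wordLength S γ : ℝ) :=
      mul_le_mul_of_nonneg_right hCinv hwnn
    have h6 : (α / A) * (wordLength S γ : ℝ)
        ≤ (α / A) * (A * ((K + dist x (γ • x) + β) / α) + B) :=
      mul_le_mul_of_nonneg_left hw (by positivity)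
    have h7 : (α / A) * (A * ((K + dist x (γ • x) + β) / α) + B)
        = K + dist x (γ • x) + β + (α / A) * B := by
      field_simp
    linarith [h5, h6, h7.le]
  · -- upper bound
    have := upper γ
    have hMC : M ≤ C := le_max_left _ _
    have hD : (0 : ℝ) ≤ (α / A) * B + K + β := by positivity
    nlinarith [(Nat.cast_nonneg (wordLength S γ) : (0:ℝ) ≤ (wordLength S γ : ℝ))]
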